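/- Uniform-in-(n,p) bound linear in c: fix c ∈ (0,1). For every integer n ≥ 1 such that m := cn is a positive integer and every real p ∈ [0,1], one has ‖Q_{m,n,p} − Uni_n‖_TV ≤ 1 − (1−c)·e^{3c/5}. -/

import Mathlib

/-- `T m n s = C(m-1,s)·(n-s)^(m-s-2)·(s+1)^(s-1)` in `ℝ`, with integer (possibly
negative) exponents interpreted via `zpow`. -/
noncomputable def T (m n s : ℕ) : ℝ :=
  ((m - 1).choose s : ℝ) * ((n : ℝ) - s) ^ ((m : ℤ) - s - 2) * ((s : ℝ) + 1) ^ ((s : ℤ) - 1)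

/-- `Q m n p j` is the conditional probability that the last of `m` cars prefers spot
`j ∈ {1,…,n}` given that all cars park, in the probabilistic parking model on `n` spots
with forward-probability `p` (Theorem 3 of Durmić–Han–Harris–Ribeiro–Yin):
`Q_{m,n,p}(j) = (n-m+2)/((n-m+1)(n+1)) − (1/(n+1)^(m-1))·
  [ p·Σ_{s=n-j+1}^{m-1} T(s) + (1-p)·Σ_{s=j}^{m-1} T(s) ]`. -/
noncomputable def Q (m n : ℕ) (p : ℝ) (j : ℕ) : ℝ :=
  ((n : ℝ) - m + 2) / (((n : ℝ) - m + 1) * ((n : ℝ) + 1)) -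
    1 / ((n : ℝ) + 1) ^ (m - 1) *
      (p * ∑ s ∈ Finset.Icc (n - j + 1) (m - 1), T m n s +
        (1 - p) * ∑ s ∈ Finset.Icc j (m - 1), T m n s)

/-- Total variation distance between `Q m n p` and the uniform distribution on `{1,…,n}`:
`(1/2)·Σ_{j=1}^n |Q_{m,n,p}(j) − 1/n|`. -/
noncomputable def tvUni (m n : ℕ) (p : ℝ) : ℝ :=
  1 / 2 * ∑ j ∈ Finset.Icc 1 n, |Q m n p j - 1 / (n : ℝ)|



lemma alt_step (N : ℕ) (f : ℕ → ℝ) :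
    ∑ k ∈ Finset.range (N+2), (-1:ℝ)^k * ((N+1).choose k) * f k
    = ∑ k ∈ Finset.range (N+1), (-1:ℝ)^k * (N.choose k) * f k
      - ∑ k ∈ Finset.range (N+1), (-1:ℝ)^k * (N.choose k) * f (k+1) := by
  rw [Finset.sum_range_succ' (fun k => (-1:ℝ)^k * ((N+1).choose k) * f k),
    Finset.sum_range_succ' (fun k => (-1:ℝ)^k * (N.choose k) * f k)]
  simp only [Nat.choose_succ_succ, Nat.choose_zero_right, Nat.cast_add, Nat.cast_one,
    Nat.cast_ofNat, pow_zero, Nat.cast_zero]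
  rw [Finset.sum_range_succ (fun k => (-1:ℝ)^(k+1) * ((N.choose k : ℝ) + (N.choose (k+1) : ℝ)) * f (k+1))]
  simp only [Nat.choose_succ_self, Nat.cast_zero, Nat.choose_self, Nat.cast_one]
  rw [Finset.sum_range_succ (fun k => (-1:ℝ)^k * (N.choose k) * f (k+1))]
  have h : ∀ x ∈ Finset.range N, (-1:ℝ)^(x+1) * ((N.choose x:ℝ) + (N.choose (x+1))) * f (x+1)
      = (-1:ℝ)^(x+1)*((N.choose (x+1) : ℝ))*f (x+1) - (-1:ℝ)^x*((N.choose x : ℝ))*f (x+1) := by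
    intro x _; ring
  rw [Finset.sum_congr rfl h, Finset.sum_sub_distrib]
  simp only [Nat.choose_self, Nat.cast_one]
  ring

lemma fd_aux (alt_step' : ∀ (N : ℕ) (f : ℕ → ℝ),
    ∑ k ∈ Finset.range (N+2), (-1:ℝ)^k * ((N+1).choose k) * f k
    = ∑ k ∈ Finset.range (N+1), (-1:ℝ)^k * (N.choose k) * f k
      - ∑ k ∈ Finset.range (N+1), (-1:ℝ)^k * (N.choose k) * f (k+1)) :
    ∀ (N : ℕ), ∀ i < N, ∀ x : ℝ,
    ∑ k ∈ Finset.range (N+1), (-1:ℝ)^k * (N.choose k) * (x + k)^i = 0 := by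
  intro N
  induction N with
  | zero => intro i hi; omega
  | succ N IH =>
    intro i hi x
    have hstep := alt_step N (fun k => (x + k)^i)
    rw [show N+1+1 = N+2 from rfl, hstep, ← Finset.sum_sub_distrib]
    have h1 : ∀ k ∈ Finset.range (N+1),
        (-1:ℝ)^k * (N.choose k) * (x + k)^i - (-1:ℝ)^k * (N.choose k) * (x + (k+1:ℕ))^i
        = - ∑ l ∈ Finset.range i, (i.choose l : ℝ) * ((-1:ℝ)^k * (N.choose k) * (x + k)^l) := by
      intro k _
      have hb : (x + (k+1:ℕ))^i = ∑ l ∈ Finset.range (i+1), (x+k)^l * (1:ℝ)^(i-l) * (i.choose l) := by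
        push_cast
        rw [show x + ((k:ℝ)+1) = (x + k) + 1 by ring, add_pow]
      rw [hb, Finset.sum_range_succ]
      simp only [one_pow, mul_one, Nat.choose_self, Nat.cast_one]
      rw [mul_add, Finset.mul_sum]
      rw [show ∀ A S : ℝ, A - (S + A) = -S from fun A S => by ring]
      apply congrArg
      apply Finset.sum_congr rfl
      intro l _; ring
    rw [Finset.sum_congr rfl h1, Finset.sum_neg_distrib, neg_eq_zero, Finset.sum_comm]
    apply Finset.sum_eq_zero
    intro l hl
    rw [← Finset.mul_sum, IH l (by simp at hl; omega) x, mul_zero]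

noncomputable def Sab (N : ℕ) (x y : ℝ) : ℝ :=
  (y + N)^N + ∑ u ∈ Finset.Icc 1 N, (N.choose u : ℝ) * x * (x + u)^(u-1) * (y + N - u)^(N-u)

lemma choose_mul_sub (N u : ℕ) : (N+1).choose u * (N+1-u) = (N+1) * N.choose u := by
  rw [Nat.add_one_mul_choose_eq,
    Nat.choose_succ_right_eq]

lemma sab_hasDeriv (N : ℕ) (x y : ℝ) :
    HasDerivAt (fun y => Sab (N+1) x y) (((N:ℝ)+1) * Sab N x (y+1)) y := by
  have h0 : HasDerivAt (fun y : ℝ => (y + ((N+1:ℕ):ℝ))^(N+1))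
      ((((N+1:ℕ)):ℝ) * (y + ((N+1:ℕ):ℝ))^N) y := by
    have := ((hasDerivAt_id y).add_const ((N+1:ℕ):ℝ)).fun_pow (N+1)
    simpa using this
  have hsum : HasDerivAt (fun y : ℝ => ∑ u ∈ Finset.Icc 1 (N+1),
      ((N+1).choose u : ℝ) * x * (x + u)^(u-1) * (y + ((N+1:ℕ):ℝ) - u)^(N+1-u))
      (∑ u ∈ Finset.Icc 1 (N+1), (((N+1).choose u : ℝ) * x * (x + u)^(u-1))
          * (((N+1-u:ℕ):ℝ) * (y + ((N+1:ℕ):ℝ) - u)^(N+1-u-1))) y := by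
    apply HasDerivAt.fun_sum
    intro u _
    have hb : HasDerivAt (fun y : ℝ => (y + ((N+1:ℕ):ℝ) - u)^(N+1-u))
        (((N+1-u:ℕ):ℝ) * (y + ((N+1:ℕ):ℝ) - u)^(N+1-u-1)) y := by
      have := (((hasDerivAt_id y).add_const ((N+1:ℕ):ℝ)).sub_const (u:ℝ)).fun_pow (N+1-u)
      simpa using this
    simpa [mul_assoc] using hb.const_mul (((N+1).choose u : ℝ) * x * (x + u)^(u-1))
  have hD := h0.fun_add hsum
  have hfun : (fun y : ℝ => Sab (N+1) x y) = (fun y : ℝ => (y + ((N+1:ℕ):ℝ))^(N+1)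
      + ∑ u ∈ Finset.Icc 1 (N+1), ((N+1).choose u : ℝ) * x * (x + u)^(u-1)
        * (y + ((N+1:ℕ):ℝ) - u)^(N+1-u)) := by
    funext z; simp [Sab]
  rw [hfun]
  convert hD using 1
  · rfl
  · rfl
  -- value equality
  have hsplit : ∑ u ∈ Finset.Icc 1 (N+1), (((N+1).choose u : ℝ) * x * (x + u)^(u-1))
      * (((N+1-u:ℕ):ℝ) * (y + ((N+1:ℕ):ℝ) - u)^(N+1-u-1))
      = ∑ u ∈ Finset.Icc 1 N, (((N+1).choose u : ℝ) * x * (x + u)^(u-1))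
      * (((N+1-u:ℕ):ℝ) * (y + ((N+1:ℕ):ℝ) - u)^(N+1-u-1)) := by
    rw [Finset.sum_Icc_succ_top (by omega)]
    simp
  rw [hsplit, Sab, mul_add, Finset.mul_sum]
  congr 1
  · push_cast; ring_nf
  · apply Finset.sum_congr rfl
    intro u hu
    simp only [Finset.mem_Icc] at hu
    have he : N+1-u-1 = N-u := by omega
    have hc : (((N+1).choose u : ℝ)) * ((N+1-u:ℕ):ℝ) = ((N:ℝ)+1) * (N.choose u : ℝ) := by
      rw [← Nat.cast_mul, choose_mul_sub]; push_cast; ring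
    have hy : y + ((N+1:ℕ):ℝ) - u = (y+1) + (N:ℝ) - u := by push_cast; ring
    rw [he, hy]
    calc ((N:ℝ)+1) * ((N.choose u : ℝ) * x * (x+u)^(u-1) * ((y+1) + (N:ℝ) - u)^(N-u))
        = ((((N+1).choose u : ℝ)) * ((N+1-u:ℕ):ℝ)) * (x * (x+u)^(u-1) * ((y+1) + (N:ℝ) - u)^(N-u)) := by
          rw [hc]; ring
      _ = (((N+1).choose u : ℝ) * x * (x + u)^(u-1)) * (((N+1-u:ℕ):ℝ) * ((y+1) + (N:ℝ) - u)^(N-u)) := by ring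

lemma fd : ∀ (N : ℕ), ∀ i < N, ∀ x : ℝ,
    ∑ k ∈ Finset.range (N+1), (-1:ℝ)^k * (N.choose k) * (x + k)^i = 0 := fd_aux alt_step

lemma sab_eval (N : ℕ) (x : ℝ) :
    Sab (N+1) x (-x - ((N+1:ℕ):ℝ)) = 0 := by
  have hr : Finset.range (N+2) = insert 0 (Finset.Icc 1 (N+1)) := by
    ext k; simp [Finset.mem_range, Finset.mem_Icc]; omega
  have hfd := fd (N+1) N (by omega) x
  rw [hr, Finset.sum_insert (by simp)] at hfd
  have : Sab (N+1) x (-x - ((N+1:ℕ):ℝ))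
      = x * (-1:ℝ)^(N+1) * ((-1:ℝ)^0 * (((N+1).choose 0 : ℝ)) * (x + (0:ℕ))^N
        + ∑ k ∈ Finset.Icc 1 (N+1), (-1:ℝ)^k * (((N+1).choose k : ℝ)) * (x + k)^N) := by
    rw [Sab, mul_add, Finset.mul_sum]
    congr 1
    · simp only [Nat.choose_zero_right, Nat.cast_one, Nat.cast_zero, pow_zero, add_zero, one_mul,
        mul_one]
      rw [show -x - ((N+1:ℕ):ℝ) + ((N+1:ℕ):ℝ) = -x by ring]
      rw [show (-x) = (-1:ℝ)*x by ring, mul_pow]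
      ring
    · apply Finset.sum_congr rfl
      intro u hu
      simp only [Finset.mem_Icc] at hu
      have hyy : -x - ((N+1:ℕ):ℝ) + ((N+1:ℕ):ℝ) - u = (-1) * (x + u) := by ring
      rw [hyy, mul_pow]
      have hneg : (-1:ℝ)^(N+1-u) = (-1:ℝ)^(N+1) * (-1:ℝ)^u := by
        have h2 : (-1:ℝ)^(N+1-u) * (-1:ℝ)^(u+u) = (-1:ℝ)^(N+1) * (-1:ℝ)^u := by
          rw [← pow_add, ← pow_add]; congr 1; omega
        have h3 : (-1:ℝ)^(u+u) = 1 := Even.neg_one_pow ⟨u, rfl⟩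
        rw [h3, mul_one] at h2; exact h2
      have hpow : (x + (u:ℝ))^(u-1) * (x + (u:ℝ))^(N+1-u) = (x + (u:ℝ))^N := by
        rw [← pow_add]; congr 1; omega
      calc ((N+1).choose u : ℝ) * x * (x + u)^(u-1) * ((-1)^(N+1-u) * (x + u)^(N+1-u))
          = ((-1:ℝ)^(N+1-u)) * (((N+1).choose u : ℝ) * x * ((x + u)^(u-1) * (x + u)^(N+1-u))) := by ring
        _ = x * (-1:ℝ)^(N+1) * ((-1:ℝ)^u * (((N+1).choose u : ℝ)) * (x + u)^N) := by
            rw [hpow, hneg]; ring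
  rw [this, hfd, mul_zero]

theorem abel_identity : ∀ (N : ℕ) (x y : ℝ), Sab N x y = (x + y + N)^N := by
  intro N
  induction N with
  | zero => intro x y; simp [Sab]
  | succ N IH =>
    intro x y
    set f : ℝ → ℝ := fun y => Sab (N+1) x y - (x + y + ((N+1:ℕ):ℝ))^(N+1) with hf
    have hD : ∀ z : ℝ, HasDerivAt f 0 z := by
      intro z
      have h1 := sab_hasDeriv N x z
      have h2 : HasDerivAt (fun y : ℝ => (x + y + ((N+1:ℕ):ℝ))^(N+1))
          ((((N+1:ℕ)):ℝ) * (x + z + ((N+1:ℕ):ℝ))^N) z := by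
        have := (((hasDerivAt_id z).const_add x).add_const ((N+1:ℕ):ℝ)).fun_pow (N+1)
        simpa using this
      have h3 := h1.sub h2
      have hval : ((N:ℝ)+1) * Sab N x (z+1) - (((N+1:ℕ)):ℝ) * (x + z + ((N+1:ℕ):ℝ))^N = 0 := by
        rw [IH x (z+1)]
        push_cast
        ring_nf
      rw [← hval]
      exact h3
    have hconst : f y = f (-x - ((N+1:ℕ):ℝ)) :=
      is_const_of_deriv_eq_zero (fun z => (hD z).differentiableAt)
        (fun z => (hD z).deriv) y _
    have hzero : f (-x - ((N+1:ℕ):ℝ)) = 0 := by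
      rw [hf]
      simp only []
      rw [sab_eval]
      rw [show x + (-x - ((N+1:ℕ):ℝ)) + ((N+1:ℕ):ℝ) = 0 by ring]
      simp
    have := hconst.trans hzero
    rw [hf] at this
    simp only [] at this
    linarith [this]

lemma sumT (m n : ℕ) (hm : 1 ≤ m) (hmn : m < n) :
    ∑ s ∈ Finset.Icc 1 (m-1), (s:ℝ) * T m n s
      = ((m:ℝ)-1) * ((n:ℝ)+1)^(m-2) / ((n:ℝ) - m + 1) := by
  rcases Nat.eq_or_lt_of_le hm with h1 | hm2'
  · simp [← h1]
  have hm2 : 2 ≤ m := hm2'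
  have hbcast : ((n - m + 1 : ℕ):ℝ) = (n:ℝ) - m + 1 := by
    push_cast [Nat.cast_sub (le_of_lt hmn)]; ring
  have hdpos : (0:ℝ) < (n:ℝ) - m + 1 := by
    have : (m:ℝ) < n := by exact_mod_cast hmn
    linarith
  have key := abel_identity (m-2) ((n - m + 1 : ℕ):ℝ) 2
  rw [Sab] at key
  have hsplit : ∑ s ∈ Finset.Icc 1 (m-1), (s:ℝ) * T m n s
      = (∑ s ∈ Finset.Icc 1 (m-2), (s:ℝ) * T m n s) + ((m-1:ℕ):ℝ) * T m n (m-1) := by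
    rw [show m - 1 = (m-2) + 1 by omega, Finset.sum_Icc_succ_top (by omega)]
  have htop : T m n (m-1) = (1 / ((n:ℝ) - m + 1)) * (m:ℝ)^(m-2) := by
    rw [T]
    have e1 : (m:ℤ) - (m-1:ℕ) - 2 = -1 := by
      have : ((m-1:ℕ):ℤ) = (m:ℤ) - 1 := by push_cast [Nat.cast_sub hm]; ring
      rw [this]; ring
    have e2 : ((m-1:ℕ):ℤ) - 1 = ((m-2:ℕ):ℤ) := by
      push_cast [Nat.cast_sub hm, Nat.cast_sub hm2]; ring
    rw [e1, e2, zpow_neg_one, zpow_natCast, Nat.choose_self]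
    have e3 : (n:ℝ) - ((m-1:ℕ):ℝ) = (n:ℝ) - m + 1 := by
      push_cast [Nat.cast_sub hm]; ring
    have e4 : ((m-1:ℕ):ℝ) + 1 = (m:ℝ) := by push_cast [Nat.cast_sub hm]; ring
    rw [e3, e4]
    ring
  have hmain : ∑ s ∈ Finset.Icc 1 (m-2), (s:ℝ) * T m n s
      = (((m:ℝ)-1) / ((n:ℝ) - m + 1)) *
        ∑ u ∈ Finset.Icc 1 (m-2), ((m-2).choose u : ℝ) * ((n - m + 1 : ℕ):ℝ)
          * (((n - m + 1 : ℕ):ℝ) + u)^(u-1) * ((2:ℝ) + (m-2:ℕ) - u)^((m-2)-u) := by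
    rw [Finset.mul_sum]
    apply Finset.sum_nbij' (fun s => m - 1 - s) (fun u => m - 1 - u)
    · intro s hs; simp only [Finset.mem_Icc] at *; omega
    · intro u hu; simp only [Finset.mem_Icc] at *; omega
    · intro s hs; simp only [Finset.mem_Icc] at hs; omega
    · intro u hu; simp only [Finset.mem_Icc] at hu; omega
    · intro s hs
      simp only [Finset.mem_Icc] at hs
      obtain ⟨hs1, hs2⟩ := hs
      rw [show m - 1 - s - 1 = m - 2 - s by omega, show m - 2 - (m - 1 - s) = s - 1 by omega]
      have eb : ((n - m + 1 : ℕ):ℝ) + ((m-1-s:ℕ):ℝ) = (n:ℝ) - s := by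
        rw [← Nat.cast_add, show n - m + 1 + (m - 1 - s) = n - s by omega,
          Nat.cast_sub (by omega)]
      have ee2 : (2:ℝ) + ((m-2:ℕ):ℝ) - ((m-1-s:ℕ):ℝ) = (s:ℝ) + 1 := by
        have h' : (2:ℕ) + (m-2) = (m-1-s) + (s+1) := by omega
        have hc := congrArg (fun t : ℕ => (t:ℝ)) h'
        push_cast at hc
        linarith
      rw [eb, ee2, T]
      have e1 : ((m:ℤ) - s - 2) = ((m - 2 - s : ℕ) : ℤ) := by
        have h' : (m - 2 - s : ℕ) + s + 2 = m := by omega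
        have hc := congrArg (fun t : ℕ => (t:ℤ)) h'
        push_cast at hc
        omega
      have e2 : ((s:ℤ) - 1) = ((s - 1 : ℕ) : ℤ) := by
        have hc := congrArg (fun t : ℕ => (t:ℤ)) (show (s-1) + 1 = s by omega)
        push_cast at hc
        omega
      rw [e1, e2, zpow_natCast, zpow_natCast]
      have hch : (m-1) * (m-2).choose (m-1-s) = s * (m-1).choose s := by
        have h1 : (m-1) * (m-2).choose (s-1) = (m-1).choose s * s := by
          have h0 := Nat.add_one_mul_choose_eq (m-2) (s-1)
          rw [show m-2+1 = m - 1 by omega, show s-1+1 = s by omega] at h0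
          exact h0
        have h2 : (m-2).choose (m-1-s) = (m-2).choose (s-1) := by
          rw [show m - 1 - s = m - 2 - (s-1) by omega]
          exact Nat.choose_symm (show s - 1 ≤ m - 2 by omega)
        rw [h2, h1, mul_comm]
      have hchR : ((m:ℝ)-1) * ((m-2).choose (m-1-s) : ℝ) = (s:ℝ) * ((m-1).choose s : ℝ) := by
        have hc := congrArg (fun t : ℕ => (t:ℝ)) hch
        push_cast [Nat.cast_sub hm] at hc
        linarith [hc]
      have hred : ((m:ℝ)-1) / ((n:ℝ) - m + 1) *
          (((m-2).choose (m-1-s) : ℝ) * ((n - m + 1 : ℕ):ℝ) * ((n:ℝ) - s)^(m-2-s) * ((s:ℝ)+1)^(s-1))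
          = ((m:ℝ)-1) * ((m-2).choose (m-1-s) : ℝ) * (((n:ℝ) - s)^(m-2-s) * ((s:ℝ)+1)^(s-1)) := by
        rw [hbcast]
        field_simp
      rw [hred]
      linear_combination (((n:ℝ) - s)^(m-2-s) * ((s:ℝ)+1)^(s-1)) * hchR.symm
  have h1 : ((2:ℝ) + ((m-2:ℕ):ℝ)) = (m:ℝ) := by
    have hc := congrArg (fun t : ℕ => (t:ℝ)) (show 2 + (m-2) = m by omega)
    push_cast at hc; linarith
  have h2 : (((n-m+1:ℕ)):ℝ) + 2 + ((m-2:ℕ):ℝ) = (n:ℝ) + 1 := by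
    have hc := congrArg (fun t : ℕ => (t:ℝ)) (show (n-m+1) + (2 + (m-2)) = n + 1 by omega)
    push_cast at hc; linarith
  rw [show ((n-m+1:ℕ):ℝ) + 2 + ((m-2:ℕ):ℝ) = ((n-m+1:ℕ):ℝ) + (2 + ((m-2:ℕ):ℝ)) by ring] at key
  rw [h1] at key
  have h2' : (((n-m+1:ℕ)):ℝ) + (m:ℝ) = (n:ℝ) + 1 := by rw [hbcast]; ring
  rw [h2'] at key
  -- key : m^(m-2) + Σ ... (m - u)^(m-2-u) = (n+1)^(m-2)
  -- goal sum in hmain has (2 + ↑(m-2) - ↑u); rewrite it to (m - u) pointwise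
  have hsum_eq : ∑ u ∈ Finset.Icc 1 (m-2), ((m-2).choose u : ℝ) * ((n - m + 1 : ℕ):ℝ)
          * (((n - m + 1 : ℕ):ℝ) + u)^(u-1) * ((2:ℝ) + (m-2:ℕ) - u)^((m-2)-u)
      = ∑ u ∈ Finset.Icc 1 (m-2), ((m-2).choose u : ℝ) * ((n - m + 1 : ℕ):ℝ)
          * (((n - m + 1 : ℕ):ℝ) + u)^(u-1) * ((m:ℝ) - u)^((m-2)-u) := by
    apply Finset.sum_congr rfl
    intro u _
    rw [show (2:ℝ) + ((m-2:ℕ):ℝ) - (u:ℝ) = ((2:ℝ) + ((m-2:ℕ):ℝ)) - u by ring, h1]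
  rw [hsplit, hmain, hsum_eq]
  have e4 : ((m-1:ℕ):ℝ) = (m:ℝ) - 1 := by push_cast [Nat.cast_sub hm]; ring
  rw [e4, htop]
  have key2 : ∑ u ∈ Finset.Icc 1 (m-2), ((m-2).choose u : ℝ) * ((n - m + 1 : ℕ):ℝ)
          * (((n - m + 1 : ℕ):ℝ) + u)^(u-1) * ((m:ℝ) - u)^((m-2)-u)
      = ((n:ℝ)+1)^(m-2) - (m:ℝ)^(m-2) := by linarith [key]
  rw [key2]
  field_simp
  ring

lemma swap_general (n M : ℕ) (hMn : M ≤ n) (f : ℕ → ℝ) (lo : ℕ → ℕ)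
    (P : ℕ → ℕ → Prop) [∀ j s, Decidable (P j s)]
    (hP : ∀ j s, 1 ≤ j → j ≤ n → 1 ≤ s → s ≤ M → ((lo j ≤ s) ↔ P j s))
    (hlo : ∀ j, 1 ≤ j → j ≤ n → 1 ≤ lo j)
    (hcard : ∀ s, 1 ≤ s → s ≤ M → (Finset.filter (fun j => P j s) (Finset.Icc 1 n)).card = s) :
    ∑ j ∈ Finset.Icc 1 n, ∑ s ∈ Finset.Icc (lo j) M, f s
      = ∑ s ∈ Finset.Icc 1 M, (s:ℝ) * f s := by
  have h1 : ∀ j ∈ Finset.Icc 1 n, ∑ s ∈ Finset.Icc (lo j) M, f s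
      = ∑ s ∈ Finset.Icc 1 M, if P j s then f s else 0 := by
    intro j hj
    simp only [Finset.mem_Icc] at hj
    have : Finset.Icc (lo j) M = Finset.filter (fun s => P j s) (Finset.Icc 1 M) := by
      ext s
      simp only [Finset.mem_Icc, Finset.mem_filter]
      constructor
      · intro ⟨ha, hb⟩
        have h1s : 1 ≤ s := le_trans (hlo j hj.1 hj.2) ha
        exact ⟨⟨h1s, hb⟩, (hP j s hj.1 hj.2 h1s hb).mp ha⟩
      · intro ⟨⟨h1s, hb⟩, hp⟩
        exact ⟨(hP j s hj.1 hj.2 h1s hb).mpr hp, hb⟩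
    rw [this, Finset.sum_filter]
  rw [Finset.sum_congr rfl h1, Finset.sum_comm]
  apply Finset.sum_congr rfl
  intro s hs
  simp only [Finset.mem_Icc] at hs
  rw [← Finset.sum_filter, Finset.sum_const, hcard s hs.1 hs.2]
  simp [mul_comm]

lemma T_nonneg (m n s : ℕ) (hs : s ≤ m - 1) (hm : 1 ≤ m) (hmn : m < n) : 0 ≤ T m n s := by
  rw [T]
  have h1 : (0:ℝ) < (n:ℝ) - s := by
    have : (s:ℝ) < (n:ℝ) := by exact_mod_cast (by omega : s < n)
    linarith
  have h2 : (0:ℝ) < (s:ℝ) + 1 := by positivity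
  positivity

lemma swap2 (m n : ℕ) (hm : 1 ≤ m) (hmn : m < n) :
    ∑ j ∈ Finset.Icc 1 n, ∑ s ∈ Finset.Icc j (m-1), T m n s
      = ∑ s ∈ Finset.Icc 1 (m-1), (s:ℝ) * T m n s := by
  apply swap_general n (m-1) (by omega) _ _ (fun j s => j ≤ s)
  · intro j s _ _ _ _; rfl
  · intro j h _; exact h
  · intro s h1 h2
    have : Finset.filter (fun j => j ≤ s) (Finset.Icc 1 n) = Finset.Icc 1 s := by
      ext j; simp only [Finset.mem_filter, Finset.mem_Icc]; omega
    rw [this, Nat.card_Icc]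
    omega

lemma swap1 (m n : ℕ) (hm : 1 ≤ m) (hmn : m < n) :
    ∑ j ∈ Finset.Icc 1 n, ∑ s ∈ Finset.Icc (n - j + 1) (m-1), T m n s
      = ∑ s ∈ Finset.Icc 1 (m-1), (s:ℝ) * T m n s := by
  apply swap_general n (m-1) (by omega) _ _ (fun j s => n + 1 ≤ j + s)
  · intro j s h1 h2 h3 h4; omega
  · intro j h1 h2; omega
  · intro s h1 h2
    have : Finset.filter (fun j => n + 1 ≤ j + s) (Finset.Icc 1 n) = Finset.Icc (n+1-s) n := by
      ext j; simp only [Finset.mem_filter, Finset.mem_Icc]; omega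
    rw [this, Nat.card_Icc]
    omega

lemma sumAQ (m n : ℕ) (hm : 1 ≤ m) (hmn : m < n) (p : ℝ) :
    ∑ j ∈ Finset.Icc 1 n, (((n : ℝ) - m + 2) / (((n : ℝ) - m + 1) * ((n : ℝ) + 1)) - Q m n p j)
      = ((m:ℝ)-1) / (((n:ℝ) - m + 1) * ((n:ℝ) + 1)) := by
  have hterm : ∀ j ∈ Finset.Icc 1 n,
      ((n : ℝ) - m + 2) / (((n : ℝ) - m + 1) * ((n : ℝ) + 1)) - Q m n p j
      = 1 / ((n : ℝ) + 1) ^ (m - 1) *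
        (p * ∑ s ∈ Finset.Icc (n - j + 1) (m - 1), T m n s +
          (1 - p) * ∑ s ∈ Finset.Icc j (m - 1), T m n s) := by
    intro j _; rw [Q]; ring
  rw [Finset.sum_congr rfl hterm]
  have : ∑ j ∈ Finset.Icc 1 n, 1 / ((n : ℝ) + 1) ^ (m - 1) *
        (p * ∑ s ∈ Finset.Icc (n - j + 1) (m - 1), T m n s +
          (1 - p) * ∑ s ∈ Finset.Icc j (m - 1), T m n s)
      = 1 / ((n : ℝ) + 1) ^ (m - 1) *
        (p * ∑ j ∈ Finset.Icc 1 n, ∑ s ∈ Finset.Icc (n - j + 1) (m - 1), T m n s +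
          (1 - p) * ∑ j ∈ Finset.Icc 1 n, ∑ s ∈ Finset.Icc j (m - 1), T m n s) := by
    rw [← Finset.mul_sum, Finset.sum_add_distrib, ← Finset.mul_sum, ← Finset.mul_sum]
  rw [this, swap1 m n hm hmn, swap2 m n hm hmn, sumT m n hm hmn]
  have hnm : (0:ℝ) < (n:ℝ) - m + 1 := by
    have : (m:ℝ) < n := by exact_mod_cast hmn
    linarith
  have hn1 : (0:ℝ) < (n:ℝ) + 1 := by positivity
  rcases Nat.eq_or_lt_of_le hm with h1 | h2
  · rw [← h1]; norm_num
  · have hpow : ((n:ℝ) + 1)^(m-1) = ((n:ℝ)+1)^(m-2) * ((n:ℝ)+1) := by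
      rw [← pow_succ]; congr 1; omega
    rw [hpow]
    have hp2 : ((n:ℝ)+1)^(m-2) ≠ 0 := by positivity
    field_simp
    ring

/-- Uniform-in-`(n,p)` bound linear in `c`: fix `c ∈ (0,1)`. For every `n ≥ 1` such that
`m := cn` is a positive integer and every `p ∈ [0,1]`,
`‖Q_{m,n,p} − Uni_n‖_TV ≤ 1 − (1−c)·e^(3c/5)`. -/
theorem tv_uniform_bound_linear_in_c (c : ℝ) (hc : 0 < c) (hc1 : c < 1) :
    ∀ n : ℕ, 1 ≤ n → ∀ m : ℕ, 1 ≤ m → (m : ℝ) = c * n →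
      ∀ p : ℝ, 0 ≤ p → p ≤ 1 →
        tvUni m n p ≤ 1 - (1 - c) * Real.exp (3 * c / 5) := by
  intro n hn m hm hmcn p hp hp1
  have hnR : (0:ℝ) < n := by exact_mod_cast hn
  have hmnR : (m:ℝ) < n := by
    rw [hmcn]
    nlinarith
  have hmn : m < n := by exact_mod_cast hmnR
  have hmR : (1:ℝ) ≤ m := by exact_mod_cast hm
  have hnm1 : (0:ℝ) < (n:ℝ) - m + 1 := by linarith
  have hn1 : (0:ℝ) < (n:ℝ) + 1 := by linarith
  set A : ℝ := ((n : ℝ) - m + 2) / (((n : ℝ) - m + 1) * ((n : ℝ) + 1)) with hA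
  -- Q j ≤ A
  have hQle : ∀ j, Q m n p j ≤ A := by
    intro j
    rw [Q, hA]
    have h1 : (0:ℝ) ≤ ∑ s ∈ Finset.Icc (n - j + 1) (m - 1), T m n s :=
      Finset.sum_nonneg fun s hs => T_nonneg m n s (by simp only [Finset.mem_Icc] at hs; omega) hm hmn
    have h2 : (0:ℝ) ≤ ∑ s ∈ Finset.Icc j (m - 1), T m n s :=
      Finset.sum_nonneg fun s hs => T_nonneg m n s (by simp only [Finset.mem_Icc] at hs; omega) hm hmn
    have h3 : (0:ℝ) ≤ 1 / ((n : ℝ) + 1) ^ (m - 1) := by positivity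
    nlinarith [mul_nonneg hp h1, mul_nonneg (by linarith : (0:ℝ) ≤ 1 - p) h2]
  -- A ≥ 1/n
  have hA1n : 1 / (n:ℝ) ≤ A := by
    rw [hA, div_le_div_iff₀ hnR (by positivity)]
    nlinarith
  -- termwise bound
  have hterm : ∀ j ∈ Finset.Icc 1 n, |Q m n p j - 1 / (n:ℝ)| ≤ (A - Q m n p j) + (A - 1/(n:ℝ)) := by
    intro j _
    have h1 := abs_sub_le (Q m n p j) A (1/(n:ℝ))
    have e1 : |Q m n p j - A| = A - Q m n p j := by
      rw [abs_of_nonpos (by linarith [hQle j])]; ring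
    have e2 : |A - 1/(n:ℝ)| = A - 1/(n:ℝ) := abs_of_nonneg (by linarith)
    linarith [h1, e1.le, e2.le, e1.ge, e2.ge]
  have hsum : ∑ j ∈ Finset.Icc 1 n, |Q m n p j - 1 / (n:ℝ)|
      ≤ ∑ j ∈ Finset.Icc 1 n, ((A - Q m n p j) + (A - 1/(n:ℝ))) := Finset.sum_le_sum hterm
  have hsum2 : ∑ j ∈ Finset.Icc 1 n, ((A - Q m n p j) + (A - 1/(n:ℝ)))
      = ((m:ℝ)-1) / (((n:ℝ) - m + 1) * ((n:ℝ) + 1)) + (n:ℝ) * (A - 1/(n:ℝ)) := by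
    rw [Finset.sum_add_distrib, sumAQ m n hm hmn p, Finset.sum_const, Nat.card_Icc]
    simp only [Nat.add_sub_cancel, nsmul_eq_mul]
  have hAval : (n:ℝ) * (A - 1/(n:ℝ)) = ((m:ℝ)-1) / (((n:ℝ) - m + 1) * ((n:ℝ) + 1)) := by
    rw [hA]
    field_simp
    ring
  have htv : tvUni m n p ≤ ((m:ℝ)-1) / (((n:ℝ) - m + 1) * ((n:ℝ) + 1)) := by
    rw [tvUni]
    rw [hsum2, hAval] at hsum
    linarith
  -- final comparison
  have hden2 : (0:ℝ) < 5*(n:ℝ) - 3*m := by linarith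
  have hstep1 : ((m:ℝ)-1) / (((n:ℝ) - m + 1) * ((n:ℝ) + 1)) ≤ 2*(m:ℝ) / (5*(n:ℝ) - 3*m) := by
    rw [div_le_div_iff₀ (by positivity) hden2]
    nlinarith [mul_nonneg (mul_nonneg (by linarith : (0:ℝ) ≤ (m:ℝ)) (by linarith : (0:ℝ) ≤ (n:ℝ)))
      (by linarith : (0:ℝ) ≤ (n:ℝ) - m - 1 + 1), hmnR, hmR, hnR,
      mul_pos (by linarith : (0:ℝ) < (m:ℝ)) hnR]
  have hexp : Real.exp (3*c/5) ≤ 1 / (1 - 3*c/5) := by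
    have h0 : (0:ℝ) < 1 - 3*c/5 := by linarith
    have h1 : 1 - 3*c/5 ≤ Real.exp (-(3*c/5)) := by
      have := Real.add_one_le_exp (-(3*c/5))
      linarith
    have he : Real.exp (3*c/5) = 1 / Real.exp (-(3*c/5)) := by
      rw [Real.exp_neg]; field_simp
    rw [he]
    exact one_div_le_one_div_of_le h0 h1
  have hcval : c = (m:ℝ)/n := by
    rw [eq_div_iff (ne_of_gt hnR)]
    linarith [hmcn]
  have hstep2 : (1-c) * Real.exp (3*c/5) ≤ 1 - 2*(m:ℝ) / (5*(n:ℝ) - 3*m) := by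
    have h1c : (0:ℝ) ≤ 1 - c := by linarith
    have h2 : (1-c) * Real.exp (3*c/5) ≤ (1-c) * (1/(1-3*c/5)) :=
      mul_le_mul_of_nonneg_left hexp h1c
    have h3 : (1-c) * (1/(1-3*c/5)) = 1 - 2*(m:ℝ) / (5*(n:ℝ) - 3*m) := by
      have e5 : 1 - 3*((m:ℝ)/n)/5 = (5*(n:ℝ)-3*m)/(5*n) := by
        field_simp
      have e6 : 1 - (m:ℝ)/n = ((n:ℝ)-m)/n := by
        field_simp
      rw [hcval, e5, e6, one_div_div]
      rw [div_mul_div_comm]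
      rw [div_eq_iff (by positivity : ((n:ℝ) * (5*(n:ℝ)-3*m)) ≠ 0)]
      have hne : (n:ℝ)*5-m*3 ≠ 0 := by linarith
      field_simp
      ring
    linarith
  linarith
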